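/- Let c ≥ 0 and β < 0. Then f_{c,β} attains its infimum on (0, ∞); denote Ω(c, β) = min_{λ>0} f_{c,β}(λ). For each g > 0: if g > Ω(c, β) then the equation f_{c,β}(λ) = g has exactly two solutions λ > 0; if g = Ω(c, β) it has exactly one solution λ > 0; and if g < Ω(c, β) it has no solutions λ > 0. -/

import Mathlib

open Real Set Filter Topology

noncomputable def rhoC (c lam : ℝ) : ℝ :=
  (Real.exp (2 * Real.pi * lam) - 1) / (Real.exp (2 * Real.pi * lam + c / 2) - 1)

noncomputable def fCB (c β lam : ℝ) : ℝ := (1 - 4 * β * lam ^ 2) / (2 * lam * rhoC c lam)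

noncomputable def Ffun (c β l : ℝ) : ℝ :=
  ((2 * l)⁻¹ - 2 * β * l) *
    (Real.exp (c / 2) + (Real.exp (c / 2) - 1) * (Real.exp (2 * Real.pi * l) - 1)⁻¹)

noncomputable def Ffun' (c β l : ℝ) : ℝ :=
  (-(2 * l ^ 2)⁻¹ - 2 * β) *
      (Real.exp (c / 2) + (Real.exp (c / 2) - 1) * (Real.exp (2 * Real.pi * l) - 1)⁻¹) -
    ((2 * l)⁻¹ - 2 * β * l) *
      ((Real.exp (c / 2) - 1) * (2 * Real.pi * Real.exp (2 * Real.pi * l)) /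
        (Real.exp (2 * Real.pi * l) - 1) ^ 2)

noncomputable def Ffun'' (c β l : ℝ) : ℝ :=
  (l ^ 3)⁻¹ *
      (Real.exp (c / 2) + (Real.exp (c / 2) - 1) * (Real.exp (2 * Real.pi * l) - 1)⁻¹) -
    2 * (-(2 * l ^ 2)⁻¹ - 2 * β) *
      ((Real.exp (c / 2) - 1) * (2 * Real.pi * Real.exp (2 * Real.pi * l)) /
        (Real.exp (2 * Real.pi * l) - 1) ^ 2) +
    ((2 * l)⁻¹ - 2 * β * l) *
      ((Real.exp (c / 2) - 1) * (4 * Real.pi ^ 2 * Real.exp (2 * Real.pi * l) *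
        (Real.exp (2 * Real.pi * l) + 1)) / (Real.exp (2 * Real.pi * l) - 1) ^ 3)

lemma hasDerivAt_idR (y : ℝ) : HasDerivAt (fun z : ℝ => z) 1 y := hasDerivAt_id y

lemma exp_gt_one {l : ℝ} (hl : 0 < l) : 1 < Real.exp (2 * Real.pi * l) :=
  Real.one_lt_exp_iff.mpr (by positivity)

lemma fCB_eq_Ffun (c β : ℝ) (hc : 0 ≤ c) : Set.EqOn (fCB c β) (Ffun c β) (Set.Ioi 0) := by
  intro l hl
  have hl : (0:ℝ) < l := hl
  have hE : 1 < Real.exp (2 * Real.pi * l) := exp_gt_one hl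
  have hE' : Real.exp (2 * Real.pi * l) - 1 ≠ 0 := by linarith
  have hE2 : Real.exp (2 * Real.pi * l + c / 2) - 1 ≠ 0 := by
    have h1 : 1 < Real.exp (2 * Real.pi * l + c / 2) := by
      have hπ := Real.pi_pos
      exact Real.one_lt_exp_iff.mpr (by positivity)
    linarith
  have hexp : Real.exp (2 * Real.pi * l + c / 2)
      = Real.exp (2 * Real.pi * l) * Real.exp (c / 2) := by rw [← Real.exp_add]
  unfold fCB rhoC Ffun
  rw [hexp] at hE2 ⊢
  have hl' : l ≠ 0 := ne_of_gt hl
  generalize rexp (2 * π * l) = E at *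
  generalize rexp (c / 2) = A at *
  field_simp
  ring

/-- key inequality: `(1-x) e^{2x} ≤ 1 + x` for `x ≥ 0`. -/
lemma key_ineq {x : ℝ} (hx : 0 ≤ x) : (1 - x) * Real.exp (2 * x) ≤ 1 + x := by
  have hd : ∀ y : ℝ, HasDerivAt (fun y : ℝ => 1 + y - (1 - y) * Real.exp (2 * y))
      (1 - (1 - 2 * y) * Real.exp (2 * y)) y := by
    intro y
    have h1 := HasDerivAt.exp ((hasDerivAt_idR y).const_mul 2)
    have h2 : HasDerivAt (fun y : ℝ => 1 - y) (-1) y := (hasDerivAt_idR y).const_sub 1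
    have h3 : HasDerivAt (fun y : ℝ => 1 + y) 1 y := (hasDerivAt_idR y).const_add 1
    exact ((h3.sub (h2.mul h1)).congr_deriv (by ring))
  have hmono : Monotone (fun y : ℝ => 1 + y - (1 - y) * Real.exp (2 * y)) := by
    apply monotone_of_deriv_nonneg
    · exact fun y => (hd y).differentiableAt
    · intro y
      rw [(hd y).deriv]
      have h1 : 1 - 2 * y ≤ Real.exp (-(2 * y)) := by
        have := Real.add_one_le_exp (-(2 * y)); linarith
      have h2 : Real.exp (-(2*y)) * Real.exp (2*y) = 1 := by
        rw [← Real.exp_add]; simp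
      nlinarith [Real.exp_pos (2 * y), Real.exp_pos (-(2*y))]
  have h0 := hmono hx
  simp only [mul_zero, Real.exp_zero] at h0
  linarith [h0]

lemma hasDerivAt_exp2pi {l : ℝ} : HasDerivAt (fun x : ℝ => Real.exp (2 * Real.pi * x))
    (2 * Real.pi * Real.exp (2 * Real.pi * l)) l :=
  (HasDerivAt.exp ((hasDerivAt_idR l).const_mul (2 * Real.pi))).congr_deriv (by ring)

lemma hasDerivAt_ufun (β : ℝ) {l : ℝ} (hl : 0 < l) :
    HasDerivAt (fun x : ℝ => (2 * x)⁻¹ - 2 * β * x) (-(2 * l ^ 2)⁻¹ - 2 * β) l := by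
  have h1 : HasDerivAt (fun x : ℝ => 2 * x) 2 l :=
    ((hasDerivAt_idR l).const_mul 2).congr_deriv (mul_one 2)
  have h2 : HasDerivAt (fun x : ℝ => (2 * x)⁻¹) (-2 / (2 * l) ^ 2) l := h1.inv (by positivity)
  have h3 : HasDerivAt (fun x : ℝ => 2 * β * x) (2 * β) l :=
    ((hasDerivAt_idR l).const_mul (2 * β)).congr_deriv (mul_one _)
  exact (h2.sub h3).congr_deriv (by field_simp)

lemma hasDerivAt_qfun (c : ℝ) {l : ℝ} (hl : 0 < l) :
    HasDerivAt (fun x : ℝ => Real.exp (c / 2) +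
        (Real.exp (c / 2) - 1) * (Real.exp (2 * Real.pi * x) - 1)⁻¹)
      (-((Real.exp (c / 2) - 1) * (2 * Real.pi * Real.exp (2 * Real.pi * l)) /
        (Real.exp (2 * Real.pi * l) - 1) ^ 2)) l := by
  have hE : 1 < Real.exp (2 * Real.pi * l) := exp_gt_one hl
  have hE' : Real.exp (2 * Real.pi * l) - 1 ≠ 0 := by linarith
  have hden : HasDerivAt (fun x : ℝ => Real.exp (2 * Real.pi * x) - 1)
      (2 * Real.pi * Real.exp (2 * Real.pi * l)) l := hasDerivAt_exp2pi.sub_const 1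
  exact (((hden.inv hE').const_mul (Real.exp (c / 2) - 1)).const_add
    (Real.exp (c / 2))).congr_deriv (by field_simp)

lemma hasDerivAt_Ffun (c β : ℝ) {l : ℝ} (hl : 0 < l) :
    HasDerivAt (Ffun c β) (Ffun' c β l) l := by
  have H := (hasDerivAt_ufun β hl).mul (hasDerivAt_qfun c hl)
  unfold Ffun Ffun'
  exact H.congr_deriv (by ring)

set_option maxHeartbeats 1000000 in
lemma hasDerivAt_Ffun' (c β : ℝ) {l : ℝ} (hl : 0 < l) :
    HasDerivAt (Ffun' c β) (Ffun'' c β l) l := by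
  have hE : 1 < Real.exp (2 * Real.pi * l) := exp_gt_one hl
  have hE' : Real.exp (2 * Real.pi * l) - 1 ≠ 0 := by linarith
  have hl' : l ≠ 0 := ne_of_gt hl
  have hden : HasDerivAt (fun x : ℝ => Real.exp (2 * Real.pi * x) - 1)
      (2 * Real.pi * Real.exp (2 * Real.pi * l)) l := hasDerivAt_exp2pi.sub_const 1
  have hp : HasDerivAt (fun x : ℝ => -(2 * x ^ 2)⁻¹ - 2 * β) ((l ^ 3)⁻¹) l := by
    have h1 : HasDerivAt (fun x : ℝ => 2 * x ^ 2) (2 * (2 * l ^ 1)) l :=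
      (hasDerivAt_pow 2 l).const_mul 2
    have h2 := (h1.inv (by positivity)).neg.sub_const (2 * β)
    exact h2.congr_deriv (by field_simp)
  have hr : HasDerivAt (fun x : ℝ =>
      (Real.exp (c / 2) - 1) * (2 * Real.pi * Real.exp (2 * Real.pi * x)) /
        (Real.exp (2 * Real.pi * x) - 1) ^ 2)
      (-((Real.exp (c / 2) - 1) * (4 * Real.pi ^ 2 * Real.exp (2 * Real.pi * l) *
        (Real.exp (2 * Real.pi * l) + 1)) / (Real.exp (2 * Real.pi * l) - 1) ^ 3)) l := by
    have hnum : HasDerivAt (fun x : ℝ =>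
        (Real.exp (c / 2) - 1) * (2 * Real.pi * Real.exp (2 * Real.pi * x)))
        ((Real.exp (c / 2) - 1) * (2 * Real.pi * (2 * Real.pi * Real.exp (2 * Real.pi * l)))) l :=
      ((hasDerivAt_exp2pi.const_mul (2 * Real.pi)).const_mul _)
    have hd2 : HasDerivAt (fun x : ℝ => (Real.exp (2 * Real.pi * x) - 1) ^ 2)
        (2 * (Real.exp (2 * Real.pi * l) - 1) ^ 1 * (2 * Real.pi * Real.exp (2 * Real.pi * l))) l :=
      hden.pow 2
    have hd2ne : ((Real.exp (2 * Real.pi * l) - 1) ^ 2) ≠ 0 := pow_ne_zero 2 hE'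
    exact (hnum.div hd2 hd2ne).congr_deriv (by field_simp; ring)
  have H := (hp.mul (hasDerivAt_qfun c hl)).sub ((hasDerivAt_ufun β hl).mul hr)
  unfold Ffun' Ffun''
  exact H.congr_deriv (by ring)

set_option maxHeartbeats 1000000 in
lemma Ffun''_pos (c β : ℝ) (hc : 0 ≤ c) (hβ : β < 0) {l : ℝ} (hl : 0 < l) :
    0 < Ffun'' c β l := by
  have hπ := Real.pi_pos
  set E := Real.exp (2 * Real.pi * l) with hEdef
  have hE : 1 < E := exp_gt_one hl
  have hD : 0 < E - 1 := by linarith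
  have hA : 1 ≤ Real.exp (c / 2) := Real.one_le_exp (by linarith)
  have hB : 0 ≤ Real.exp (c / 2) - 1 := by linarith
  set b : ℝ := -2 * β with hbdef
  have hb : 0 < b := by simp [hbdef]; linarith
  set R : ℝ := (Real.exp (c / 2) - 1) * (2 * Real.pi * E) / (E - 1) ^ 2 with hRdef
  set S : ℝ := (Real.exp (c / 2) - 1) * (4 * Real.pi ^ 2 * E * (E + 1)) / (E - 1) ^ 3 with hSdef
  have hR : 0 ≤ R := by positivity
  have hS : 0 ≤ S := by positivity
  -- key: E - 1 ≤ π l (E + 1)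
  have hkey : E - 1 ≤ Real.pi * l * (E + 1) := by
    have h := key_ineq (x := Real.pi * l) (by positivity)
    have : Real.exp (2 * (Real.pi * l)) = E := by rw [hEdef]; ring_nf
    rw [this] at h
    nlinarith
  -- 2R ≤ l * S
  have h2RS : 2 * R ≤ l * S := by
    have heq : l * S - 2 * R = (Real.exp (c / 2) - 1) * (4 * Real.pi * E) *
        (Real.pi * l * (E + 1) - (E - 1)) / (E - 1) ^ 3 := by
      rw [hRdef, hSdef]; field_simp; ring
    have hnn : 0 ≤ (Real.exp (c / 2) - 1) * (4 * Real.pi * E) *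
        (Real.pi * l * (E + 1) - (E - 1)) / (E - 1) ^ 3 := by
      apply div_nonneg _ (by positivity)
      apply mul_nonneg (by positivity) (by linarith)
    linarith [heq ▸ hnn]
  -- bounds on u' and u
  have hp_le : -(2 * l ^ 2)⁻¹ - 2 * β ≤ b := by
    have : 0 < (2 * l ^ 2)⁻¹ := by positivity
    rw [hbdef]; linarith
  have hu_ge : b * l ≤ (2 * l)⁻¹ - 2 * β * l := by
    have : 0 < (2 * l)⁻¹ := by positivity
    rw [hbdef]; nlinarith
  have hq1 : 1 ≤ Real.exp (c / 2) + (Real.exp (c / 2) - 1) * (E - 1)⁻¹ := by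
    have : 0 ≤ (Real.exp (c / 2) - 1) * (E - 1)⁻¹ := by positivity
    linarith
  have hT1 : 0 < (l ^ 3)⁻¹ * (Real.exp (c / 2) + (Real.exp (c / 2) - 1) * (E - 1)⁻¹) := by
    have h3 : 0 < (l ^ 3)⁻¹ := by positivity
    nlinarith
  have hterm2 : -(2 * b * R) ≤ -(2 * (-(2 * l ^ 2)⁻¹ - 2 * β) * R) := by
    nlinarith [mul_le_mul_of_nonneg_right hp_le hR]
  have hterm3 : b * l * S ≤ ((2 * l)⁻¹ - 2 * β * l) * S :=
    mul_le_mul_of_nonneg_right hu_ge hS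
  have hbal : 0 ≤ -(2 * b * R) + b * l * S := by
    have := mul_le_mul_of_nonneg_left h2RS hb.le
    nlinarith
  have : Ffun'' c β l = (l ^ 3)⁻¹ * (Real.exp (c / 2) + (Real.exp (c / 2) - 1) * (E - 1)⁻¹)
      - 2 * (-(2 * l ^ 2)⁻¹ - 2 * β) * R + ((2 * l)⁻¹ - 2 * β * l) * S := by
    rw [Ffun'', hRdef, hSdef]
  rw [this]
  nlinarith [hterm2, hterm3, hbal, hT1]

lemma contOn_fCB (c β : ℝ) (hc : 0 ≤ c) : ContinuousOn (fCB c β) (Set.Ioi 0) := by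
  have hF : ContinuousOn (Ffun c β) (Set.Ioi 0) :=
    fun l hl => (hasDerivAt_Ffun c β hl).continuousAt.continuousWithinAt
  exact hF.congr (fCB_eq_Ffun c β hc)

lemma strictConvex_fCB (c β : ℝ) (hc : 0 ≤ c) (hβ : β < 0) :
    StrictConvexOn ℝ (Set.Ioi 0) (fCB c β) := by
  apply StrictMonoOn.strictConvexOn_of_deriv (convex_Ioi 0) (contOn_fCB c β hc)
  rw [interior_Ioi]
  have hderiv : ∀ l ∈ Set.Ioi (0:ℝ), deriv (fCB c β) l = Ffun' c β l := by
    intro l hl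
    have hev : fCB c β =ᶠ[𝓝 l] Ffun c β :=
      eventuallyEq_of_mem (isOpen_Ioi.mem_nhds hl) (fCB_eq_Ffun c β hc)
    rw [hev.deriv_eq]
    exact (hasDerivAt_Ffun c β hl).deriv
  have hmono : StrictMonoOn (Ffun' c β) (Set.Ioi 0) := by
    apply strictMonoOn_of_deriv_pos (convex_Ioi 0)
    · exact fun l hl => (hasDerivAt_Ffun' c β hl).continuousAt.continuousWithinAt
    · intro l hl
      rw [interior_Ioi] at hl
      rw [(hasDerivAt_Ffun' c β hl).deriv]
      exact Ffun''_pos c β hc hβ hl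
  intro x hx y hy hxy
  rw [hderiv x hx, hderiv y hy]
  exact hmono hx hy hxy

lemma fCB_lb (c β : ℝ) (hc : 0 ≤ c) (hβ : β < 0) {l : ℝ} (hl : 0 < l) :
    (2 * l)⁻¹ - 2 * β * l ≤ fCB c β l := by
  rw [fCB_eq_Ffun c β hc hl]
  unfold Ffun
  have hE : 1 < Real.exp (2 * Real.pi * l) := exp_gt_one hl
  have hA : 1 ≤ Real.exp (c / 2) := Real.one_le_exp (by linarith)
  have hq : 0 ≤ (Real.exp (c / 2) - 1) * (Real.exp (2 * Real.pi * l) - 1)⁻¹ :=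
    mul_nonneg (by linarith) (inv_nonneg.mpr (by linarith))
  have hu : 0 < (2 * l)⁻¹ - 2 * β * l := by
    have : 0 < (2 * l)⁻¹ := by positivity
    nlinarith
  nlinarith

lemma fCB_tendsto_zero (c β : ℝ) (hc : 0 ≤ c) (hβ : β < 0) :
    Tendsto (fCB c β) (𝓝[>] (0:ℝ)) atTop := by
  apply tendsto_atTop_mono' (𝓝[>] (0:ℝ)) (f₁ := fun l => l⁻¹ * (2:ℝ)⁻¹)
  · filter_upwards [self_mem_nhdsWithin] with l hl
    have hl : (0:ℝ) < l := hl
    have h1 := fCB_lb c β hc hβ hl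
    have h2 : l⁻¹ * (2:ℝ)⁻¹ = (2 * l)⁻¹ := by rw [mul_inv]; ring
    nlinarith [mul_pos (neg_pos.mpr hβ) hl]
  · exact tendsto_inv_nhdsGT_zero.atTop_mul_const (by norm_num)

lemma fCB_tendsto_top (c β : ℝ) (hc : 0 ≤ c) (hβ : β < 0) :
    Tendsto (fCB c β) atTop atTop := by
  apply tendsto_atTop_mono' atTop (f₁ := fun l => (-(2*β)) * l)
  · filter_upwards [eventually_gt_atTop (0:ℝ)] with l hl
    have h1 := fCB_lb c β hc hβ hl
    have : 0 < (2 * l)⁻¹ := by positivity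
    nlinarith
  · exact Tendsto.const_mul_atTop (by linarith) tendsto_id

theorem rotating_waves_stmt_8 (c β : ℝ) (hc : 0 ≤ c) (hβ : β < 0) :
    ∃ Ω : ℝ, IsLeast (fCB c β '' Set.Ioi 0) Ω ∧
      ∀ g : ℝ, 0 < g →
        (Ω < g → {lam : ℝ | 0 < lam ∧ fCB c β lam = g}.encard = 2) ∧
        (g = Ω → {lam : ℝ | 0 < lam ∧ fCB c β lam = g}.encard = 1) ∧
        (g < Ω → {lam : ℝ | 0 < lam ∧ fCB c β lam = g} = ∅) := by
  set T := fCB c β with hT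
  have hcont : ContinuousOn T (Set.Ioi 0) := contOn_fCB c β hc
  have hconv : StrictConvexOn ℝ (Set.Ioi 0) T := strictConvex_fCB c β hc hβ
  have h0 : Tendsto T (𝓝[>] (0:ℝ)) atTop := fCB_tendsto_zero c β hc hβ
  have htop : Tendsto T atTop atTop := fCB_tendsto_top c β hc hβ
  -- bound near 0
  obtain ⟨δ, hδ0, hδ⟩ : ∃ δ ∈ Set.Ioi (0:ℝ), Set.Ioo (0:ℝ) δ ⊆ {x | T 1 ≤ T x} := by
    have hmem : {x | T 1 ≤ T x} ∈ 𝓝[>] (0:ℝ) := h0.eventually (eventually_ge_atTop (T 1))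
    exact mem_nhdsGT_iff_exists_Ioo_subset.mp hmem
  have hδ0 : (0:ℝ) < δ := hδ0
  -- bound near ∞
  obtain ⟨N, hN⟩ : ∃ N : ℝ, ∀ x ≥ N, T 1 ≤ T x :=
    eventually_atTop.mp (htop.eventually (eventually_ge_atTop (T 1)))
  set ε : ℝ := min (δ / 2) 1 with hε
  have hε0 : 0 < ε := lt_min (by linarith) one_pos
  have hε1 : ε ≤ 1 := min_le_right _ _
  have hεδ : ε < δ := lt_of_le_of_lt (min_le_left _ _) (by linarith)
  set M : ℝ := max N 2 with hM
  have hM2 : (2:ℝ) ≤ M := le_max_right _ _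
  have hIcc : Set.Icc ε M ⊆ Set.Ioi 0 := fun z hz => lt_of_lt_of_le hε0 hz.1
  have hne : (Set.Icc ε M).Nonempty := Set.nonempty_Icc.mpr (by linarith)
  obtain ⟨a, haI, hamin⟩ := isCompact_Icc.exists_isMinOn hne (hcont.mono hIcc)
  rw [isMinOn_iff] at hamin
  have ha0 : (0:ℝ) < a := lt_of_lt_of_le hε0 haI.1
  have h1mem : (1:ℝ) ∈ Set.Icc ε M := ⟨hε1, by linarith⟩
  have hmin : ∀ y ∈ Set.Ioi (0:ℝ), T a ≤ T y := by
    intro y hy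
    have hy : (0:ℝ) < y := hy
    rcases lt_or_ge y ε with h | h
    · have h1 : T 1 ≤ T y := hδ ⟨hy, lt_trans h hεδ⟩
      exact le_trans (hamin 1 h1mem) h1
    rcases le_or_gt y M with h2 | h2
    · exact hamin y ⟨h, h2⟩
    · have h1 : T 1 ≤ T y := hN y (le_of_lt (lt_of_le_of_lt (le_max_left N 2) h2))
      exact le_trans (hamin 1 h1mem) h1
  have hstrict_min : ∀ y ∈ Set.Ioi (0:ℝ), y ≠ a → T a < T y := by
    intro y hy hne
    by_contra hcon
    push_neg at hcon
    have hy' : (0:ℝ) < y := hy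
    have hmem : (1/2:ℝ) * a + (1/2:ℝ) * y ∈ Set.Ioi (0:ℝ) := by
      simp only [Set.mem_Ioi]; nlinarith
    have hmid := hconv.2 (Set.mem_Ioi.mpr ha0) hy (Ne.symm hne)
      (show (0:ℝ) < 1/2 by norm_num) (show (0:ℝ) < 1/2 by norm_num)
      (show (1/2:ℝ) + 1/2 = 1 by norm_num)
    simp only [smul_eq_mul] at hmid
    have := hmin _ hmem
    linarith
  -- strict monotonicity to the right of a
  have hstrictR : ∀ x ∈ Set.Ioi (0:ℝ), ∀ y ∈ Set.Ioi (0:ℝ), a ≤ x → x < y → T x < T y := by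
    intro x hx y hy hax hxy
    rcases eq_or_lt_of_le hax with rfl | hax
    · exact hstrict_min y hy (ne_of_gt hxy)
    · set t : ℝ := (y - x) / (y - a) with htdef
      have hya : 0 < y - a := by linarith
      have ht0 : 0 < t := div_pos (by linarith) hya
      have ht1 : t < 1 := (div_lt_one hya).2 (by linarith)
      have hcomb : t * a + (1 - t) * y = x := by rw [htdef]; field_simp; ring
      have h2 := hconv.2 (Set.mem_Ioi.mpr ha0) hy (by intro h; rw [h] at hax; linarith)
        ht0 (show (0:ℝ) < 1 - t by linarith) (show t + (1 - t) = 1 by ring)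
      simp only [smul_eq_mul] at h2
      rw [hcomb] at h2
      have h3 := hmin y hy
      nlinarith
  -- strict antitonicity to the left of a
  have hstrictL : ∀ x ∈ Set.Ioi (0:ℝ), ∀ y ∈ Set.Ioi (0:ℝ), x < y → y ≤ a → T y < T x := by
    intro x hx y hy hxy hya
    rcases eq_or_lt_of_le hya with rfl | hya
    · exact hstrict_min x hx (ne_of_lt hxy)
    · set t : ℝ := (a - y) / (a - x) with htdef
      have hax : 0 < a - x := by linarith
      have ht0 : 0 < t := div_pos (by linarith) hax
      have ht1 : t < 1 := (div_lt_one hax).2 (by linarith)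
      have hcomb : t * x + (1 - t) * a = y := by rw [htdef]; field_simp; ring
      have h2 := hconv.2 hx (Set.mem_Ioi.mpr ha0) (by intro h; rw [h] at hxy; linarith)
        ht0 (show (0:ℝ) < 1 - t by linarith) (show t + (1 - t) = 1 by ring)
      simp only [smul_eq_mul] at h2
      rw [hcomb] at h2
      have h3 := hmin x hx
      nlinarith
  refine ⟨T a, ⟨⟨a, Set.mem_Ioi.mpr ha0, rfl⟩, ?_⟩, ?_⟩
  · rintro w ⟨y, hy, rfl⟩
    exact hmin y hy
  intro g hg
  refine ⟨?_, ?_, ?_⟩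
  · -- two solutions
    intro hΩg
    obtain ⟨x1, hx1g, hx10, hx1a⟩ : ∃ x1, g ≤ T x1 ∧ 0 < x1 ∧ x1 < a := by
      have h1 := h0.eventually (eventually_ge_atTop g)
      have h2 : ∀ᶠ x in 𝓝[>] (0:ℝ), x ∈ Set.Ioo (0:ℝ) a :=
        eventually_mem_set.mpr (Ioo_mem_nhdsGT_of_mem ⟨le_refl (0:ℝ), ha0⟩)
      obtain ⟨x1, hx1, hx1'⟩ := (h1.and h2).exists
      exact ⟨x1, hx1, hx1'.1, hx1'.2⟩
    obtain ⟨x2, hx2g, hx2a⟩ : ∃ x2, g ≤ T x2 ∧ a < x2 := by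
      have h1 := htop.eventually (eventually_ge_atTop g)
      obtain ⟨x2, hx2, hx2'⟩ := (h1.and (eventually_gt_atTop a)).exists
      exact ⟨x2, hx2, hx2'⟩
    have hsub1 : Set.Icc x1 a ⊆ Set.Ioi 0 := fun z hz => lt_of_lt_of_le hx10 hz.1
    have hsub2 : Set.Icc a x2 ⊆ Set.Ioi 0 := fun z hz => lt_of_lt_of_le ha0 hz.1
    obtain ⟨s1, hs1mem, hs1⟩ := intermediate_value_Icc' (le_of_lt hx1a) (hcont.mono hsub1)
      (Set.mem_Icc.mpr ⟨le_of_lt hΩg, hx1g⟩)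
    obtain ⟨s2, hs2mem, hs2⟩ := intermediate_value_Icc (le_of_lt hx2a) (hcont.mono hsub2)
      (Set.mem_Icc.mpr ⟨le_of_lt hΩg, hx2g⟩)
    have hs10 : 0 < s1 := lt_of_lt_of_le hx10 hs1mem.1
    have hs1a : s1 < a := lt_of_le_of_ne hs1mem.2 (by intro h; rw [h] at hs1; rw [hs1] at hΩg; exact lt_irrefl _ hΩg)
    have hs2a : a < s2 := lt_of_le_of_ne hs2mem.1 (by
      intro h; rw [← h] at hs2; rw [hs2] at hΩg; exact lt_irrefl _ hΩg)
    have hs20 : 0 < s2 := lt_trans ha0 hs2a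
    have hseteq : {lam : ℝ | 0 < lam ∧ T lam = g} = {s1, s2} := by
      ext l
      simp only [Set.mem_setOf_eq, Set.mem_insert_iff, Set.mem_singleton_iff]
      constructor
      · rintro ⟨hl0, hlg⟩
        rcases lt_trichotomy l a with h | h | h
        · left
          rcases lt_trichotomy l s1 with h' | h' | h'
          · exfalso
            have := hstrictL l (Set.mem_Ioi.mpr hl0) s1 (Set.mem_Ioi.mpr hs10) h' (le_of_lt hs1a)
            rw [hs1, hlg] at this; exact lt_irrefl _ this
          · exact h'
          · exfalso
            have := hstrictL s1 (Set.mem_Ioi.mpr hs10) l (Set.mem_Ioi.mpr hl0) h' (le_of_lt h)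
            rw [hs1, hlg] at this; exact lt_irrefl _ this
        · exfalso; rw [h] at hlg; rw [hlg] at hΩg; exact lt_irrefl _ hΩg
        · right
          rcases lt_trichotomy l s2 with h' | h' | h'
          · exfalso
            have := hstrictR l (Set.mem_Ioi.mpr hl0) s2 (Set.mem_Ioi.mpr hs20) (le_of_lt h) h'
            rw [hs2, hlg] at this; exact lt_irrefl _ this
          · exact h'
          · exfalso
            have := hstrictR s2 (Set.mem_Ioi.mpr hs20) l (Set.mem_Ioi.mpr hl0) (le_of_lt hs2a) h'
            rw [hs2, hlg] at this; exact lt_irrefl _ this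
      · rintro (rfl | rfl)
        · exact ⟨hs10, hs1⟩
        · exact ⟨hs20, hs2⟩
    rw [hseteq]
    exact Set.encard_pair (by linarith)
  · -- one solution
    intro hgΩ
    have hseteq : {lam : ℝ | 0 < lam ∧ T lam = g} = {a} := by
      ext l
      simp only [Set.mem_setOf_eq, Set.mem_singleton_iff]
      constructor
      · rintro ⟨hl0, hlg⟩
        rcases lt_trichotomy l a with h | h | h
        · exfalso
          have := hstrictL l (Set.mem_Ioi.mpr hl0) a (Set.mem_Ioi.mpr ha0) h (le_refl a)
          rw [hlg, hgΩ] at this; exact lt_irrefl _ this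
        · exact h
        · exfalso
          have := hstrictR a (Set.mem_Ioi.mpr ha0) l (Set.mem_Ioi.mpr hl0) (le_refl a) h
          rw [hlg, hgΩ] at this; exact lt_irrefl _ this
      · rintro rfl
        exact ⟨ha0, hgΩ.symm⟩
    rw [hseteq]
    exact Set.encard_singleton a
  · -- no solutions
    intro hgΩ
    rw [Set.eq_empty_iff_forall_notMem]
    rintro l ⟨hl0, hlg⟩
    have := hmin l (Set.mem_Ioi.mpr hl0)
    rw [hlg] at this
    linarith
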